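/- Let N ≥ 2 and t be integers with 1 ≤ t ≤ N, let α = log t / log N, and let β satisfy 0 < β < α. Then there exists a constant C > 0 (depending only on N, t, β) such that for every positive integer j there exists a set A ⊆ {0, 1, …, N^j − 1} with |A| = t^j whose discrete Fourier coefficients satisfy |χ̂_A(k)| ≤ C·(t/N)^j·k^{−β/2} for every integer k with 1 ≤ k ≤ N^j − 1. In particular, |A| = (N^j)^α, so A has fractional density α relative to N^j. -/

import Mathlib

open Complex Real Finset

/-- Discrete Fourier coefficient of the characteristic function of a finite set
`A ⊆ {0, …, M-1}`. -/
noncomputable def finsetFourier (M : ℕ) (A : Finset ℕ) (k : ℤ) : ℂ :=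
  (M : ℂ)⁻¹ * ∑ a ∈ A, Complex.exp (-(2 * Real.pi * Complex.I * k * a) / M)


namespace SalemAux


/-- The centered indicator weight. -/
noncomputable def Y (M n : ℕ) (x : Fin M) : ℝ := (if (x : ℕ) < n then 1 else 0) - n / M

lemma card_filter_lt (M n : ℕ) (hnM : n ≤ M) :
    (Finset.univ.filter fun x : Fin M => (x : ℕ) < n).card = n := by
  have h : ∀ m ∈ Finset.range n, m < M := fun m hm => lt_of_lt_of_le (Finset.mem_range.1 hm) hnM
  have he : (Finset.univ.filter fun x : Fin M => (x : ℕ) < n) = (Finset.range n).attachFin h := by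
    ext x
    simp [Finset.mem_attachFin]
  rw [he, Finset.card_attachFin, Finset.card_range]

lemma sum_Y (M n : ℕ) (hM : 0 < M) (hnM : n ≤ M) : ∑ x : Fin M, Y M n x = 0 := by
  have h1 : (∑ x : Fin M, if (x:ℕ) < n then (1:ℝ) else 0) = n := by
    rw [Finset.sum_boole, card_filter_lt M n hnM]
  simp only [Y, Finset.sum_sub_distrib, h1, Finset.sum_const, Finset.card_univ,
    Fintype.card_fin, nsmul_eq_mul]
  field_simp
  simp

lemma abs_Y_le_one (M n : ℕ) (hM : 0 < M) (hnM : n ≤ M) (x : Fin M) : |Y M n x| ≤ 1 := by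
  have h0 : (0:ℝ) ≤ (n:ℝ)/M := by positivity
  have h1 : (n:ℝ)/M ≤ 1 := by
    rw [div_le_one (by positivity)]
    exact_mod_cast hnM
  unfold Y
  split <;> rw [abs_le] <;> constructor <;> linarith

lemma sum_sq_Y_le (M n : ℕ) (hM : 0 < M) (hnM : n ≤ M) :
    ∑ x : Fin M, |Y M n x| ^ 2 ≤ 2 * n := by
  have h0 : (0:ℝ) ≤ (n:ℝ)/M := by positivity
  have h1 : (n:ℝ)/M ≤ 1 := by
    rw [div_le_one (by positivity)]
    exact_mod_cast hnM
  have hb : ∀ x : Fin M, |Y M n x| ^ 2 ≤ if (x:ℕ) < n then 1 else ((n:ℝ)/M)^2 := by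
    intro x
    unfold Y
    split
    · have := abs_Y_le_one M n hM hnM x
      unfold Y at this
      rw [if_pos (by assumption)] at this
      calc |(1:ℝ) - n/M| ^ 2 ≤ 1^2 := by
            exact pow_le_pow_left₀ (abs_nonneg _) this 2
        _ = 1 := one_pow 2
    · rw [zero_sub, abs_neg, _root_.abs_of_nonneg h0]
  calc ∑ x : Fin M, |Y M n x| ^ 2 ≤ ∑ x : Fin M, (if (x:ℕ) < n then (1:ℝ) else ((n:ℝ)/M)^2) :=
        Finset.sum_le_sum fun x _ => hb x
    _ = (n : ℝ) * 1 + (M - n : ℕ) * ((n:ℝ)/M)^2 := by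
        rw [Finset.sum_ite, Finset.sum_const, Finset.sum_const, Finset.filter_not,
          Finset.card_sdiff_of_subset (Finset.filter_subset _ _), card_filter_lt M n hnM,
          Finset.card_univ, Fintype.card_fin, nsmul_eq_mul, nsmul_eq_mul]
    _ ≤ (n:ℝ) + (M:ℝ) * ((n:ℝ)/M)^2 := by
        have : ((M - n : ℕ):ℝ) ≤ (M:ℝ) := by
          have := Nat.sub_le M n; exact_mod_cast this
        nlinarith [sq_nonneg ((n:ℝ)/M)]
    _ ≤ 2 * n := by
        have hMne : (M:ℝ) ≠ 0 := by positivity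
        have : (M:ℝ) * ((n:ℝ)/M)^2 = (n:ℝ) * ((n:ℝ)/M) := by field_simp
        rw [this]
        nlinarith [h0, h1, Nat.cast_nonneg (α := ℝ) n]


/-- Power sums of the weight `Y`. -/
noncomputable def nu (M n : ℕ) (c : ℕ) : ℂ := ∑ x : Fin M, ((Y M n x : ℝ) : ℂ) ^ c

lemma nu_zero (M n : ℕ) : nu M n 0 = (M : ℂ) := by
  simp [nu]

lemma nu_one (M n : ℕ) (hM : 0 < M) (hnM : n ≤ M) : nu M n 1 = 0 := by
  simp only [nu, pow_one]
  rw [← Complex.ofReal_sum, sum_Y M n hM hnM, Complex.ofReal_zero]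

lemma abs_nu_le (M n : ℕ) (hM : 0 < M) (hnM : n ≤ M) (c : ℕ) (hc : 2 ≤ c) :
    ‖nu M n c‖ ≤ 2 * n := by
  calc ‖nu M n c‖ ≤ ∑ x : Fin M, ‖((Y M n x : ℝ):ℂ) ^ c‖ :=
        norm_sum_le _ _
    _ = ∑ x : Fin M, |Y M n x| ^ c := by
        simp [norm_pow, Real.norm_eq_abs]
    _ ≤ ∑ x : Fin M, |Y M n x| ^ 2 := by
        apply Finset.sum_le_sum
        intro x _
        exact pow_le_pow_of_le_one (abs_nonneg _) (abs_Y_le_one M n hM hnM x) hc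
    _ ≤ 2 * n := sum_sq_Y_le M n hM hnM


/-- Combined index function of a tuple of pairs. -/
def Ff (m M : ℕ) (f : Fin m → Fin M × Fin M) : Fin m ⊕ Fin m → Fin M :=
  Sum.elim (fun i => (f i).1) (fun i => (f i).2)

/-- Multiplicity of the value `a` among the `2m` indices of `f`. -/
def cnt (m M : ℕ) (f : Fin m → Fin M × Fin M) (a : Fin M) : ℕ :=
  (Finset.univ.filter fun s => Ff m M f s = a).card

lemma indep (M : ℕ) (g : Fin M → Fin M → ℂ) :
    ∑ ω : Fin M → Fin M, ∏ a, g a (ω a) = ∏ a, ∑ x, g a x := by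
  rw [← Fintype.piFinset_univ]
  exact Finset.sum_prod_piFinset univ g

lemma prod_comp_pow {ι κ : Type*} [Fintype ι] [Fintype κ] [DecidableEq κ] (g : ι → κ) (h : κ → ℂ) :
    ∏ s : ι, h (g s) = ∏ a : κ, h a ^ (Finset.univ.filter fun s => g s = a).card := by
  rw [← Finset.prod_fiberwise univ g (fun s => h (g s))]
  apply Finset.prod_congr rfl
  intro a _
  calc ∏ s ∈ Finset.univ.filter (fun s => g s = a), h (g s)
      = ∏ _s ∈ Finset.univ.filter (fun s => g s = a), h a :=
        Finset.prod_congr rfl (fun s hs => by rw [(Finset.mem_filter.1 hs).2])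
    _ = h a ^ (Finset.univ.filter fun s => g s = a).card := Finset.prod_const _

lemma expansion (M n m : ℕ) (z : Fin M → ℂ) :
    ∑ ω : Fin M → Fin M, ((∑ a, (Y M n (ω a) : ℂ) * z a) *
        (starRingEnd ℂ) (∑ a, (Y M n (ω a) : ℂ) * z a)) ^ m
      = ∑ f : Fin m → Fin M × Fin M,
          (∏ i, (z (f i).1 * (starRingEnd ℂ) (z (f i).2))) *
            ∏ a, nu M n (cnt m M f a) := by
  have step1 : ∀ ω : Fin M → Fin M,
      (∑ a, (Y M n (ω a) : ℂ) * z a) * (starRingEnd ℂ) (∑ a, (Y M n (ω a) : ℂ) * z a)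
      = ∑ p : Fin M × Fin M, ((Y M n (ω p.1) : ℂ) * (Y M n (ω p.2) : ℂ)) *
          (z p.1 * (starRingEnd ℂ) (z p.2)) := by
    intro ω
    rw [map_sum, Finset.sum_mul_sum, Fintype.sum_prod_type]
    apply Finset.sum_congr rfl; intro a _
    apply Finset.sum_congr rfl; intro b _
    rw [map_mul, Complex.conj_ofReal]
    ring
  calc ∑ ω : Fin M → Fin M, ((∑ a, (Y M n (ω a) : ℂ) * z a) *
        (starRingEnd ℂ) (∑ a, (Y M n (ω a) : ℂ) * z a)) ^ m
      = ∑ ω : Fin M → Fin M, ∑ f : Fin m → Fin M × Fin M,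
          ∏ i, (((Y M n (ω (f i).1) : ℂ) * (Y M n (ω (f i).2) : ℂ)) *
            (z (f i).1 * (starRingEnd ℂ) (z (f i).2))) := by
        apply Finset.sum_congr rfl; intro ω _
        have hpow : ∀ T : ℂ, T ^ m = ∏ _i : Fin m, T := fun T => by
          rw [Finset.prod_const, Finset.card_univ, Fintype.card_fin]
        rw [step1 ω, hpow, Finset.prod_univ_sum, Fintype.piFinset_univ]
    _ = ∑ f : Fin m → Fin M × Fin M, ∑ ω : Fin M → Fin M,
          (∏ i, (z (f i).1 * (starRingEnd ℂ) (z (f i).2))) *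
            ∏ a, ((Y M n (ω a) : ℂ)) ^ (cnt m M f a) := by
        rw [Finset.sum_comm]
        apply Finset.sum_congr rfl; intro f _
        apply Finset.sum_congr rfl; intro ω _
        rw [Finset.prod_mul_distrib, mul_comm]
        congr 1
        calc ∏ i, ((Y M n (ω (f i).1) : ℂ) * (Y M n (ω (f i).2) : ℂ))
            = ∏ s : Fin m ⊕ Fin m, (Y M n (ω (Ff m M f s)) : ℂ) := by
              rw [Fintype.prod_sum_type, Finset.prod_mul_distrib]
              rfl
          _ = ∏ a, ((Y M n (ω a) : ℂ)) ^ (cnt m M f a) :=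
              prod_comp_pow (Ff m M f) (fun a => (Y M n (ω a) : ℂ))
    _ = ∑ f : Fin m → Fin M × Fin M,
          (∏ i, (z (f i).1 * (starRingEnd ℂ) (z (f i).2))) *
            ∏ a, nu M n (cnt m M f a) := by
        apply Finset.sum_congr rfl; intro f _
        rw [← Finset.mul_sum]
        congr 1
        exact indep M (fun a x => ((Y M n x : ℂ)) ^ (cnt m M f a))


lemma sum_cnt (m M : ℕ) (f : Fin m → Fin M × Fin M) : ∑ a, cnt m M f a = m + m := by
  have h := Finset.card_eq_sum_card_fiberwise
    (f := Ff m M f) (s := Finset.univ) (t := Finset.univ) (fun s _ => Finset.mem_univ _)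
  rw [Finset.card_univ] at h
  simp only [Fintype.card_sum, Fintype.card_fin] at h
  exact h.symm

lemma cnt_ne_zero (m M : ℕ) (f : Fin m → Fin M × Fin M) (s : Fin m ⊕ Fin m) :
    cnt m M f (Ff m M f s) ≠ 0 := by
  have hs : s ∈ Finset.univ.filter (fun s' => Ff m M f s' = Ff m M f s) := by simp
  exact (Finset.card_pos.2 ⟨s, hs⟩).ne'

lemma supp_card_le (m M : ℕ) (f : Fin m → Fin M × Fin M) (hg : ∀ a, cnt m M f a ≠ 1) :
    (Finset.univ.filter fun a => cnt m M f a ≠ 0).card ≤ m := by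
  have h2 : ∀ a ∈ (Finset.univ.filter fun a => cnt m M f a ≠ 0), 2 ≤ cnt m M f a := by
    intro a ha
    have h1 := (Finset.mem_filter.1 ha).2
    have h2 := hg a
    omega
  have hle := Finset.card_nsmul_le_sum
    (Finset.univ.filter fun a => cnt m M f a ≠ 0) (cnt m M f) 2 h2
  have hle2 : ∑ a ∈ (Finset.univ.filter fun a => cnt m M f a ≠ 0), cnt m M f a
      ≤ ∑ a, cnt m M f a :=
    Finset.sum_le_sum_of_subset (Finset.filter_subset _ _)
  rw [sum_cnt] at hle2
  have hle3 := le_trans hle hle2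
  simp only [smul_eq_mul] at hle3
  omega

lemma card_strat (m M r : ℕ) :
    ((Finset.univ : Finset (Fin m → Fin M × Fin M)).filter fun f =>
      (Finset.univ.filter fun a => cnt m M f a ≠ 0).card = r).card ≤ r ^ (m + m) * M ^ r := by
  classical
  rcases Nat.eq_zero_or_pos r with hr | hr
  · subst hr
    rcases Finset.eq_empty_or_nonempty ((Finset.univ : Finset (Fin m → Fin M × Fin M)).filter
      fun f => (Finset.univ.filter fun a => cnt m M f a ≠ 0).card = 0) with he | ⟨f, hf⟩
    · rw [he]; simp
    · have hf2 := (Finset.mem_filter.1 hf).2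
      have hall : ∀ a, cnt m M f a = 0 := by
        intro a
        by_contra hco
        have ha : a ∈ Finset.univ.filter fun a => cnt m M f a ≠ 0 := by simp [hco]
        have := Finset.card_pos.2 ⟨a, ha⟩
        omega
      have hsum := sum_cnt m M f
      rw [Finset.sum_congr rfl (fun a _ => hall a), Finset.sum_const, smul_zero] at hsum
      have hm : m = 0 := by omega
      subst hm
      have hcard : ((Finset.univ : Finset (Fin 0 → Fin M × Fin M)).filter fun f =>
          (Finset.univ.filter fun a => cnt 0 M f a ≠ 0).card = 0).card ≤
          Fintype.card (Fin 0 → Fin M × Fin M) := by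
        rw [← Finset.card_univ]; exact Finset.card_le_card (Finset.filter_subset _ _)
      simpa using hcard
  · rcases Nat.eq_zero_or_pos M with hM | hM
    · subst hM
      have he : ((Finset.univ : Finset (Fin m → Fin 0 × Fin 0)).filter fun f =>
          (Finset.univ.filter fun a => cnt m 0 f a ≠ 0).card = r) = ∅ := by
        rw [Finset.filter_eq_empty_iff]
        intro f _ hcard
        have hpos : 0 < (Finset.univ.filter fun a => cnt m 0 f a ≠ 0).card := by omega
        obtain ⟨a, _⟩ := Finset.card_pos.1 hpos
        exact a.elim0
      rw [he]; simp
    · have hNer : Nonempty (Fin r) := ⟨⟨0, hr⟩⟩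
      have hNe : Nonempty (((Fin m ⊕ Fin m) → Fin r) × (Fin r → Fin M)) :=
        ⟨⟨fun _ => ⟨0, hr⟩, fun _ => ⟨0, hM⟩⟩⟩
      set Φ : (Fin m → Fin M × Fin M) → ((Fin m ⊕ Fin m) → Fin r) × (Fin r → Fin M) :=
        fun f =>
          if h : (Finset.univ.filter fun a => cnt m M f a ≠ 0).card = r then
            (fun s => (Finset.orderIsoOfFin _ h).symm ⟨Ff m M f s, by
                simp only [Finset.mem_filter]
                exact ⟨Finset.mem_univ _, cnt_ne_zero m M f s⟩⟩,
             fun i => ((Finset.orderIsoOfFin _ h) i : Fin M))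
          else Classical.arbitrary _ with hΦ
      have key : ∀ f (h : (Finset.univ.filter fun a => cnt m M f a ≠ 0).card = r)
          (s : Fin m ⊕ Fin m), ((Φ f).2 ((Φ f).1 s) : Fin M) = Ff m M f s := by
        intro f h s
        rw [hΦ]
        simp only [dif_pos h]
        rw [OrderIso.apply_symm_apply]
      have hinj : Set.InjOn Φ ((Finset.univ : Finset (Fin m → Fin M × Fin M)).filter fun f =>
          (Finset.univ.filter fun a => cnt m M f a ≠ 0).card = r) := by
        intro f₁ h₁ f₂ h₂ heq
        have hc₁ := (Finset.mem_filter.1 h₁).2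
        have hc₂ := (Finset.mem_filter.1 h₂).2
        have hFf : ∀ s, Ff m M f₁ s = Ff m M f₂ s := by
          intro s
          rw [← key f₁ hc₁ s, ← key f₂ hc₂ s, heq]
        funext i
        exact Prod.ext (hFf (Sum.inl i)) (hFf (Sum.inr i))
      calc ((Finset.univ : Finset (Fin m → Fin M × Fin M)).filter fun f =>
            (Finset.univ.filter fun a => cnt m M f a ≠ 0).card = r).card
          ≤ (Finset.univ : Finset (((Fin m ⊕ Fin m) → Fin r) × (Fin r → Fin M))).card :=
            Finset.card_le_card_of_injOn Φ (fun _ _ => Finset.mem_univ _) hinj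
        _ = r ^ (m + m) * M ^ r := by
            rw [Finset.card_univ, Fintype.card_prod, Fintype.card_fun, Fintype.card_fun]
            simp [Fintype.card_sum]


lemma moment (M n m : ℕ) (hM : 0 < M) (hn : 0 < n) (hnM : n ≤ M) (z : Fin M → ℂ)
    (hz : ∀ a, ‖z a‖ = 1) :
    ∑ ω : Fin M → Fin M, (‖∑ a, (Y M n (ω a) : ℂ) * z a‖) ^ (2 * m)
      ≤ (((m+1) * m ^ (2*m) * 2^m : ℕ) : ℝ) * (M:ℝ) ^ (M:ℕ) * (n:ℝ) ^ m := by
  classical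
  set S : (Fin M → Fin M) → ℂ := fun ω => ∑ a, (Y M n (ω a) : ℂ) * z a with hS
  have habs : ∀ ω ∈ (Finset.univ : Finset (Fin M → Fin M)),
      (S ω * (starRingEnd ℂ) (S ω)) ^ m = (((‖S ω‖) ^ (2*m) : ℝ) : ℂ) := by
    intro ω _
    rw [Complex.mul_conj, Complex.normSq_eq_norm_sq, Complex.ofReal_pow, ← pow_mul,
      Complex.ofReal_pow]
  have hA : ‖∑ ω : Fin M → Fin M, (S ω * (starRingEnd ℂ) (S ω)) ^ m‖
      = ∑ ω : Fin M → Fin M, (‖S ω‖) ^ (2*m) := by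
    rw [Finset.sum_congr rfl habs, ← Complex.ofReal_sum, Complex.norm_real, Real.norm_eq_abs]
    exact abs_of_nonneg (Finset.sum_nonneg fun ω _ => by positivity)
  rw [← hA, expansion M n m z]
  -- bound the expanded sum
  have hW : ∀ f : Fin m → Fin M × Fin M,
      ‖∏ i, (z (f i).1 * (starRingEnd ℂ) (z (f i).2))‖ = 1 := by
    intro f
    rw [norm_prod]
    rw [Finset.prod_congr rfl (fun i _ => ?_), Finset.prod_const, one_pow]
    rw [norm_mul, Complex.norm_conj, hz, hz, mul_one]
  have step1 : ‖∑ f : Fin m → Fin M × Fin M,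
        (∏ i, (z (f i).1 * (starRingEnd ℂ) (z (f i).2))) * ∏ a, nu M n (cnt m M f a)‖
      ≤ ∑ f : Fin m → Fin M × Fin M, ∏ a, ‖nu M n (cnt m M f a)‖ := by
    refine le_trans (norm_sum_le _ _) (le_of_eq (Finset.sum_congr rfl fun f _ => ?_))
    rw [norm_mul, hW, one_mul, norm_prod]
  refine le_trans step1 ?_
  -- split into good and bad tuples
  set P : (Fin m → Fin M × Fin M) → Prop := fun f => ∀ a, cnt m M f a ≠ 1 with hP
  have hsplit := Finset.sum_filter_add_sum_filter_not (Finset.univ : Finset (Fin m → Fin M × Fin M))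
    P (fun f => ∏ a, ‖nu M n (cnt m M f a)‖)
  rw [← hsplit]
  have hbad : ∑ f ∈ Finset.univ.filter (fun f => ¬ P f),
      ∏ a, ‖nu M n (cnt m M f a)‖ = 0 := by
    apply Finset.sum_eq_zero
    intro f hf
    obtain ⟨a, ha⟩ := not_forall.1 (Finset.mem_filter.1 hf).2
    have ha1 : cnt m M f a = 1 := not_ne_iff.1 ha
    apply Finset.prod_eq_zero (Finset.mem_univ a)
    rw [ha1, nu_one M n hM hnM, norm_zero]
  rw [hbad, add_zero]
  -- good part
  have hgoodbound : ∀ f ∈ Finset.univ.filter P,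
      ∏ a, ‖nu M n (cnt m M f a)‖
        ≤ (M:ℝ) ^ (M - (Finset.univ.filter fun a => cnt m M f a ≠ 0).card)
            * ((2*n:ℝ)) ^ ((Finset.univ.filter fun a => cnt m M f a ≠ 0).card) := by
    intro f hf
    have hgood : ∀ a, cnt m M f a ≠ 1 := (Finset.mem_filter.1 hf).2
    rw [← Finset.prod_filter_mul_prod_filter_not Finset.univ (fun a => cnt m M f a ≠ 0)]
    have h1 : ∏ a ∈ Finset.univ.filter (fun a => cnt m M f a ≠ 0),
        ‖nu M n (cnt m M f a)‖
        ≤ ((2*n:ℝ)) ^ ((Finset.univ.filter fun a => cnt m M f a ≠ 0).card) := by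
      rw [← Finset.prod_const]
      apply Finset.prod_le_prod (fun a _ => norm_nonneg _)
      intro a ha
      have h0 := (Finset.mem_filter.1 ha).2
      have h1 := hgood a
      exact abs_nu_le M n hM hnM _ (by omega)
    have h2 : ∏ a ∈ Finset.univ.filter (fun a => ¬ cnt m M f a ≠ 0),
        ‖nu M n (cnt m M f a)‖
        = (M:ℝ) ^ (M - (Finset.univ.filter fun a => cnt m M f a ≠ 0).card) := by
      rw [Finset.prod_congr rfl (fun a ha => ?_), Finset.prod_const]
      · congr 1
        rw [Finset.filter_not, Finset.card_sdiff_of_subset (Finset.filter_subset _ _), Finset.card_univ,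
          Fintype.card_fin]
      · have h0 : cnt m M f a = 0 := not_ne_iff.1 (Finset.mem_filter.1 ha).2
        rw [h0, nu_zero, Complex.norm_natCast]
    rw [h2]
    rw [mul_comm ((M:ℝ) ^ (M - (Finset.univ.filter fun a => cnt m M f a ≠ 0).card))
      (((2*n:ℝ)) ^ ((Finset.univ.filter fun a => cnt m M f a ≠ 0).card))]
    exact mul_le_mul_of_nonneg_right h1 (by positivity)
  refine le_trans (Finset.sum_le_sum hgoodbound) ?_
  have hmap : ∀ f ∈ Finset.univ.filter P,
      (Finset.univ.filter fun a => cnt m M f a ≠ 0).card ∈ Finset.range (m+1) :=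
    fun f hf => Finset.mem_range.2 (Nat.lt_succ_of_le
      (supp_card_le m M f (Finset.mem_filter.1 hf).2))
  have hfib := Finset.sum_fiberwise_of_maps_to hmap
    (fun f => (M:ℝ) ^ (M - (Finset.univ.filter fun a => cnt m M f a ≠ 0).card)
      * ((2*n:ℝ)) ^ ((Finset.univ.filter fun a => cnt m M f a ≠ 0).card))
  rw [← hfib]
  have hinner : ∀ r ∈ Finset.range (m+1),
      ∑ f ∈ (Finset.univ.filter P).filter
          (fun f => (Finset.univ.filter fun a => cnt m M f a ≠ 0).card = r),
        ((M:ℝ) ^ (M - (Finset.univ.filter fun a => cnt m M f a ≠ 0).card)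
          * ((2*n:ℝ)) ^ ((Finset.univ.filter fun a => cnt m M f a ≠ 0).card))
      ≤ ((m:ℝ)) ^ (2*m) * (M:ℝ) ^ (M:ℕ) * ((2*n:ℝ)) ^ m := by
    intro r _
    rcases Finset.eq_empty_or_nonempty ((Finset.univ.filter P).filter
        (fun f => (Finset.univ.filter fun a => cnt m M f a ≠ 0).card = r)) with he | ⟨f₀, hf₀⟩
    · rw [he, Finset.sum_empty]
      positivity
    · have hf₀P : P f₀ := (Finset.mem_filter.1 (Finset.mem_filter.1 hf₀).1).2
      have hf₀r : (Finset.univ.filter fun a => cnt m M f₀ a ≠ 0).card = r :=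
        (Finset.mem_filter.1 hf₀).2
      have hrm : r ≤ m := hf₀r ▸ supp_card_le m M f₀ hf₀P
      have hrM : r ≤ M := by
        rw [← hf₀r]
        calc (Finset.univ.filter fun a => cnt m M f₀ a ≠ 0).card
            ≤ (Finset.univ : Finset (Fin M)).card := Finset.card_le_card (Finset.filter_subset _ _)
          _ = M := by rw [Finset.card_univ, Fintype.card_fin]
      have hconst : ∀ f ∈ (Finset.univ.filter P).filter
          (fun f => (Finset.univ.filter fun a => cnt m M f a ≠ 0).card = r),
          ((M:ℝ) ^ (M - (Finset.univ.filter fun a => cnt m M f a ≠ 0).card)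
            * ((2*n:ℝ)) ^ ((Finset.univ.filter fun a => cnt m M f a ≠ 0).card))
          = (M:ℝ) ^ (M - r) * ((2*n:ℝ)) ^ r := by
        intro f hf
        rw [(Finset.mem_filter.1 hf).2]
      rw [Finset.sum_congr rfl hconst, Finset.sum_const, nsmul_eq_mul]
      have hcard : (((Finset.univ.filter P).filter
          (fun f => (Finset.univ.filter fun a => cnt m M f a ≠ 0).card = r)).card : ℝ)
          ≤ ((r ^ (m+m) * M ^ r : ℕ) : ℝ) := by
        have hsub : ((Finset.univ.filter P).filter
            (fun f => (Finset.univ.filter fun a => cnt m M f a ≠ 0).card = r))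
            ⊆ (Finset.univ.filter
              (fun f => (Finset.univ.filter fun a => cnt m M f a ≠ 0).card = r)) :=
          Finset.filter_subset_filter _ (Finset.filter_subset _ _)
        exact_mod_cast le_trans (Finset.card_le_card hsub) (card_strat m M r)
      calc (((Finset.univ.filter P).filter
            (fun f => (Finset.univ.filter fun a => cnt m M f a ≠ 0).card = r)).card : ℝ)
            * ((M:ℝ) ^ (M - r) * ((2*n:ℝ)) ^ r)
          ≤ ((r ^ (m+m) * M ^ r : ℕ) : ℝ) * ((M:ℝ) ^ (M - r) * ((2*n:ℝ)) ^ r) := by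
            apply mul_le_mul_of_nonneg_right hcard (by positivity)
        _ = (r:ℝ) ^ (m+m) * ((M:ℝ) ^ r * (M:ℝ) ^ (M - r)) * ((2*n:ℝ)) ^ r := by
            push_cast; ring
        _ = (r:ℝ) ^ (m+m) * (M:ℝ) ^ (M:ℕ) * ((2*n:ℝ)) ^ r := by
            rw [← pow_add, Nat.add_sub_cancel' hrM]
        _ ≤ ((m:ℝ)) ^ (2*m) * (M:ℝ) ^ (M:ℕ) * ((2*n:ℝ)) ^ m := by
            have h1 : (r:ℝ) ^ (m+m) ≤ ((m:ℝ)) ^ (2*m) := by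
              rw [show m + m = 2*m by ring]
              exact pow_le_pow_left₀ (by positivity) (by exact_mod_cast hrm) _
            have h2 : ((2*n:ℝ)) ^ r ≤ ((2*n:ℝ)) ^ m := by
              apply pow_le_pow_right₀ ?_ hrm
              have : (1:ℝ) ≤ (n:ℝ) := by exact_mod_cast hn
              linarith
            have hM0 : (0:ℝ) ≤ (M:ℝ) ^ (M:ℕ) := by positivity
            have h2n0 : (0:ℝ) ≤ ((2*n:ℝ)) ^ r := by positivity
            have hmm0 : (0:ℝ) ≤ ((m:ℝ)) ^ (2*m) := by positivity
            exact mul_le_mul (mul_le_mul h1 le_rfl hM0 hmm0) h2 h2n0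
              (by positivity)
  refine le_trans (Finset.sum_le_sum hinner) (le_of_eq ?_)
  rw [Finset.sum_const, Finset.card_range, nsmul_eq_mul]
  push_cast
  rw [mul_pow]
  ring


lemma select (M n m : ℕ) (hM : 0 < M) (hn : 0 < n) (hnM : n ≤ M)
    (z : Fin M → Fin M → ℂ) (hz : ∀ k a, ‖z k a‖ = 1) :
    ∃ ω : Fin M → Fin M, ∀ k : Fin M,
      (‖∑ a, (Y M n (ω a) : ℂ) * z k a‖) ^ (2*m)
        ≤ (((m+1) * m ^ (2*m) * 2^m : ℕ) : ℝ) * (M:ℝ) * (n:ℝ) ^ m := by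
  classical
  have hNe : Nonempty (Fin M) := ⟨⟨0, hM⟩⟩
  set B : ℝ := (((m+1) * m ^ (2*m) * 2^m : ℕ) : ℝ) with hB
  have htot : ∑ ω : Fin M → Fin M,
      ∑ k : Fin M, (‖∑ a, (Y M n (ω a) : ℂ) * z k a‖) ^ (2*m)
      ≤ ∑ _ω : Fin M → Fin M, B * (M:ℝ) * (n:ℝ) ^ m := by
    rw [Finset.sum_comm]
    calc ∑ k : Fin M, ∑ ω : Fin M → Fin M,
          (‖∑ a, (Y M n (ω a) : ℂ) * z k a‖) ^ (2*m)
        ≤ ∑ _k : Fin M, B * (M:ℝ) ^ (M:ℕ) * (n:ℝ) ^ m :=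
          Finset.sum_le_sum fun k _ => moment M n m hM hn hnM (z k) (hz k)
      _ = (M:ℝ) * (B * (M:ℝ) ^ (M:ℕ) * (n:ℝ) ^ m) := by
          rw [Finset.sum_const, Finset.card_univ, Fintype.card_fin, nsmul_eq_mul]
      _ = ∑ _ω : Fin M → Fin M, B * (M:ℝ) * (n:ℝ) ^ m := by
          rw [Finset.sum_const, Finset.card_univ, Fintype.card_fun, Fintype.card_fin,
            nsmul_eq_mul]
          push_cast
          ring
  obtain ⟨ω, _, hω⟩ := Finset.exists_le_of_sum_le Finset.univ_nonempty htot
  refine ⟨ω, fun k => le_trans ?_ hω⟩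
  exact Finset.single_le_sum (f := fun k : Fin M =>
    (‖∑ a, (Y M n (ω a) : ℂ) * z k a‖) ^ (2*m))
    (fun k _ => by positivity) (Finset.mem_univ k)

lemma geom_vanish (M k : ℕ) (hk1 : 1 ≤ k) (hkM : k < M) :
    ∑ a ∈ Finset.range M, Complex.exp (-(2 * Real.pi * Complex.I * k * a) / M) = 0 := by
  have hM : 0 < M := lt_trans (by omega) hkM
  set w : ℂ := Complex.exp (-(2 * Real.pi * Complex.I * k) / M) with hw
  have hterm : ∀ a ∈ Finset.range M,
      Complex.exp (-(2 * Real.pi * Complex.I * k * a) / M) = w ^ a := by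
    intro a _
    rw [hw, ← Complex.exp_nat_mul]
    congr 1
    ring
  rw [Finset.sum_congr rfl hterm]
  have hw1 : w ≠ 1 := by
    intro hcontra
    rw [hw, Complex.exp_eq_one_iff] at hcontra
    obtain ⟨q, hq⟩ := hcontra
    have hMne : (M:ℂ) ≠ 0 := by
      simp only [ne_eq, Nat.cast_eq_zero]
      omega
    have hpi : (Real.pi : ℂ) ≠ 0 := by
      simp only [ne_eq, Complex.ofReal_eq_zero]
      exact Real.pi_ne_zero
    have hI : Complex.I ≠ 0 := Complex.I_ne_zero
    have h2 : -(2*(Real.pi:ℂ)*Complex.I*(k:ℂ)) = (q:ℂ)*(2*(Real.pi:ℂ)*Complex.I)*(M:ℂ) := by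
      rw [div_eq_iff hMne] at hq
      linear_combination hq
    have h3 : (2*(Real.pi:ℂ)*Complex.I) * (-(k:ℂ)) = (2*(Real.pi:ℂ)*Complex.I) * ((q:ℂ)*(M:ℂ)) := by
      linear_combination h2
    have h2piI : (2*(Real.pi:ℂ)*Complex.I) ≠ 0 := by
      apply mul_ne_zero (mul_ne_zero two_ne_zero hpi) hI
    have h4 : -(k:ℂ) = (q:ℂ)*(M:ℂ) := mul_left_cancel₀ h2piI h3
    have h5 : -(k:ℤ) = q * (M:ℤ) := by exact_mod_cast h4
    have hq0 : q ≠ 0 := by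
      rintro rfl
      simp only [zero_mul] at h5
      omega
    have habs : |q * (M:ℤ)| = (k:ℤ) := by
      have : q * (M:ℤ) = -(k:ℤ) := h5.symm
      rw [this, abs_neg, _root_.abs_of_nonneg (by positivity : (0:ℤ) ≤ (k:ℤ))]
    have hge : (M:ℤ) ≤ |q * (M:ℤ)| := by
      rw [abs_mul, _root_.abs_of_nonneg (show (0:ℤ) ≤ (M:ℤ) by positivity)]
      have h1q : (1:ℤ) ≤ |q| := Int.one_le_abs (by exact_mod_cast hq0)
      nlinarith [Int.natCast_pos.2 hM]
    rw [habs] at hge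
    omega
  rw [geom_sum_eq hw1]
  have hwM : w ^ M = 1 := by
    rw [hw, ← Complex.exp_nat_mul]
    have harg : (M:ℂ) * (-(2 * Real.pi * Complex.I * k) / M) = (-(k:ℤ)) * (2 * Real.pi * Complex.I) := by
      have hMne : (M:ℂ) ≠ 0 := by
        simp only [ne_eq, Nat.cast_eq_zero]; omega
      push_cast
      field_simp
    rw [harg]
    exact_mod_cast Complex.exp_int_mul_two_pi_mul_I (-(k:ℤ))
  rw [hwM, sub_self, zero_div]



end SalemAux

set_option maxHeartbeats 1000000 in
open SalemAux in
/-- Section 5: existence of Salem-type sets in the integers.  For each `j` there is a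
set `A ⊆ {0,…,N^j − 1}` of cardinality `t^j` (hence of fractional density
`α = log t / log N` relative to `N^j`) whose Fourier coefficients decay like
`(t/N)^j k^{−β/2}`. -/
theorem salem_type_set_exists (N t : ℕ) (α β : ℝ)
    (hN : 2 ≤ N) (ht₁ : 1 ≤ t) (ht₂ : t ≤ N)
    (hα : α = Real.log t / Real.log N)
    (hβ₀ : 0 < β) (hβα : β < α) :
    ∃ C : ℝ, 0 < C ∧ ∀ j : ℕ, 1 ≤ j →
      ∃ A : Finset ℕ, A ⊆ Finset.range (N ^ j) ∧ A.card = t ^ j ∧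
        ∀ k : ℕ, 1 ≤ k → k ≤ N ^ j - 1 →
          ‖finsetFourier (N ^ j) A k‖ ≤
            C * ((t : ℝ) / N) ^ j * (k : ℝ) ^ (-β / 2) := by
  classical
  have hN1 : (1:ℝ) < (N:ℝ) := by exact_mod_cast hN
  have hlogN : 0 < Real.log N := Real.log_pos hN1
  have hα0 : 0 < α := lt_trans hβ₀ hβα
  have ht2 : 2 ≤ t := by
    by_contra h
    have ht1 : t = 1 := by omega
    rw [ht1] at hα
    simp only [Nat.cast_one, Real.log_one, zero_div] at hα
    linarith
  have htR : (1:ℝ) < (t:ℝ) := by exact_mod_cast ht2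
  have hNα : (N:ℝ) ^ α = (t:ℝ) := by
    rw [hα, Real.rpow_def_of_pos (by positivity), mul_comm, div_mul_cancel₀ _ (ne_of_gt hlogN)]
    exact Real.exp_log (by positivity)
  have hαβ : 0 < α - β := by linarith
  set m : ℕ := ⌈(α - β)⁻¹⌉₊ with hmdef
  have hm0 : 0 < m := Nat.ceil_pos.2 (by positivity)
  have hmge : 1 ≤ (m:ℝ) * (α - β) := by
    have h1 : (α - β)⁻¹ ≤ (m:ℝ) := Nat.le_ceil _
    calc (1:ℝ) = (α-β)⁻¹ * (α-β) := by field_simp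
      _ ≤ m * (α-β) := mul_le_mul_of_nonneg_right h1 (le_of_lt hαβ)
  set Bn : ℕ := (m+1) * m ^ (2*m) * 2^m with hBndef
  have hBn0 : 0 < Bn := Nat.mul_pos (Nat.mul_pos (Nat.succ_pos m) (pow_pos hm0 _))
    (pow_pos (by norm_num) m)
  have hBn1 : (1:ℝ) ≤ (Bn:ℝ) := by exact_mod_cast hBn0
  have h2m0 : 2*m ≠ 0 := by omega
  refine ⟨2*(Bn:ℝ), by positivity, ?_⟩
  intro j hj
  set M : ℕ := N ^ j with hMdef
  set n : ℕ := t ^ j with hndef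
  have hM0 : 0 < M := pow_pos (by omega) j
  have hM2 : 2 ≤ M := le_trans hN (Nat.le_self_pow (by omega) N)
  have hn0 : 0 < n := pow_pos (by omega) j
  have hnM : n ≤ M := Nat.pow_le_pow_left ht₂ j
  have hMR0 : (0:ℝ) < (M:ℝ) := by exact_mod_cast hM0
  -- the exponentials
  set E : ℕ → ℕ → ℂ := fun k x =>
    Complex.exp (-(2 * (Real.pi:ℂ) * Complex.I * (k:ℂ) * (x:ℂ)) / (M:ℂ)) with hEdef
  have habsE : ∀ k x : ℕ, ‖E k x‖ = 1 := by
    intro k x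
    simp only [hEdef]
    have harg : (-(2 * (Real.pi:ℂ) * Complex.I * (k:ℂ) * (x:ℂ)) / (M:ℂ))
        = ((-(2 * Real.pi * (k:ℝ) * (x:ℝ)) / (M:ℝ) : ℝ) : ℂ) * Complex.I := by
      push_cast; ring
    rw [harg, Complex.norm_exp_ofReal_mul_I]
  set z : Fin M → Fin M → ℂ := fun k a => E (k:ℕ) (a:ℕ) with hzdef
  have hzabs : ∀ k a, ‖z k a‖ = 1 := fun k a => habsE _ _
  obtain ⟨ω, hω⟩ := select M n m hM0 hn0 hnM z hzabs
  set A₀ : Finset ℕ := (Finset.univ.filter fun a : Fin M => ((ω a : ℕ)) < n).image Fin.val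
    with hA₀def
  have hA₀sub : A₀ ⊆ Finset.range M := by
    intro x hx
    obtain ⟨a, _, rfl⟩ := Finset.mem_image.1 hx
    exact Finset.mem_range.2 a.2
  have hA₀card : A₀.card = (Finset.univ.filter fun a : Fin M => ((ω a : ℕ)) < n).card :=
    Finset.card_image_of_injective _ Fin.val_injective
  -- rewrite the random sums
  have hYc : ∀ x : Fin M, ((Y M n x : ℝ):ℂ) = (if (x:ℕ) < n then (1:ℂ) else 0) - (n:ℂ)/(M:ℂ) := by
    intro x
    unfold Y
    split_ifs <;> push_cast <;> ring
  have hrw : ∀ k : Fin M, (∑ a, (Y M n (ω a) : ℂ) * z k a)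
      = (∑ x ∈ A₀, E (k:ℕ) x) - ((n:ℂ)/(M:ℂ)) * ∑ x ∈ Finset.range M, E (k:ℕ) x := by
    intro k
    have h1 : ∀ a : Fin M, (Y M n (ω a) : ℂ) * z k a
        = (if ((ω a : ℕ)) < n then z k a else 0) - ((n:ℂ)/(M:ℂ)) * z k a := by
      intro a
      rw [hYc]
      split_ifs <;> ring
    rw [Finset.sum_congr rfl (fun a _ => h1 a), Finset.sum_sub_distrib, ← Finset.mul_sum]
    congr 1
    · rw [← Finset.sum_filter]
      rw [Finset.sum_image (fun a _ b _ h => Fin.val_injective h)]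
    · congr 1
      simp only [hzdef]
      exact Fin.sum_univ_eq_sum_range (fun x => E (k:ℕ) x) M
  -- the k = 0 coefficient gives cardinality control
  have hzero : (∑ a, (Y M n (ω a) : ℂ) * z (⟨0, hM0⟩ : Fin M) a)
      = ((A₀.card : ℝ) - (n:ℝ) : ℝ) := by
    rw [hrw]
    have hE0 : ∀ x ∈ Finset.range M, E ((⟨0, hM0⟩ : Fin M) : ℕ) x = 1 := by
      intro x _
      rw [hEdef]
      norm_num
    have hE0' : ∀ x ∈ A₀, E ((⟨0, hM0⟩ : Fin M) : ℕ) x = 1 := fun x _ => hE0 x (hA₀sub ‹_›)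
    rw [Finset.sum_congr rfl hE0, Finset.sum_congr rfl hE0', Finset.sum_const, Finset.sum_const,
      Finset.card_range, nsmul_eq_mul, nsmul_eq_mul, mul_one, mul_one]
    have : ((n:ℂ)/(M:ℂ)) * (M:ℂ) = (n:ℂ) :=
      div_mul_cancel₀ _ (Nat.cast_ne_zero.2 (by omega))
    rw [this]
    push_cast
    ring
  -- cardinality control via the k = 0 bound
  have hcabs : |(A₀.card : ℝ) - (n:ℝ)| ^ (2*m) ≤ (Bn:ℝ) * (M:ℝ) * (n:ℝ)^m := by
    have h := hω ⟨0, hM0⟩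
    rw [hzero, Complex.norm_real, Real.norm_eq_abs] at h
    exact h
  -- adjust the cardinality to exactly n
  have hAex : ∃ A : Finset ℕ, A ⊆ Finset.range M ∧ A.card = n ∧
      ∀ k : ℕ, ‖(∑ x ∈ A, E k x) - (∑ x ∈ A₀, E k x)‖ ≤ |(A₀.card:ℝ) - (n:ℝ)| := by
    rcases le_total A₀.card n with hc | hc
    · obtain ⟨A, hA₀A, hAsub, hAcard⟩ := Finset.exists_subsuperset_card_eq hA₀sub hc
        (by rw [Finset.card_range]; exact hnM)
      refine ⟨A, hAsub, hAcard, fun k => ?_⟩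
      have hsplit : (∑ x ∈ A, E k x) - (∑ x ∈ A₀, E k x) = ∑ x ∈ A \ A₀, E k x := by
        rw [← Finset.sum_sdiff hA₀A]; ring
      rw [hsplit]
      calc ‖∑ x ∈ A \ A₀, E k x‖ ≤ ∑ x ∈ A \ A₀, ‖E k x‖ :=
            norm_sum_le _ _
        _ = ((A \ A₀).card : ℝ) := by
            rw [Finset.sum_congr rfl (fun x _ => habsE k x), Finset.sum_const, nsmul_eq_mul,
              mul_one]
        _ = |(A₀.card:ℝ) - (n:ℝ)| := by
            rw [Finset.card_sdiff_of_subset hA₀A, hAcard, Nat.cast_sub hc, abs_sub_comm]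
            rw [_root_.abs_of_nonneg]
            have : ((A₀.card:ℝ)) ≤ (n:ℝ) := by exact_mod_cast hc
            linarith
    · obtain ⟨A, hAA₀, hAcard⟩ := Finset.exists_subset_card_eq hc
      refine ⟨A, subset_trans hAA₀ hA₀sub, hAcard, fun k => ?_⟩
      have hsplit : (∑ x ∈ A, E k x) - (∑ x ∈ A₀, E k x) = -∑ x ∈ A₀ \ A, E k x := by
        rw [← Finset.sum_sdiff hAA₀]; ring
      rw [hsplit, norm_neg]
      calc ‖∑ x ∈ A₀ \ A, E k x‖ ≤ ∑ x ∈ A₀ \ A, ‖E k x‖ :=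
            norm_sum_le _ _
        _ = ((A₀ \ A).card : ℝ) := by
            rw [Finset.sum_congr rfl (fun x _ => habsE k x), Finset.sum_const, nsmul_eq_mul,
              mul_one]
        _ = |(A₀.card:ℝ) - (n:ℝ)| := by
            rw [Finset.card_sdiff_of_subset hAA₀, hAcard, Nat.cast_sub hc]
            rw [_root_.abs_of_nonneg]
            have : ((n:ℝ)) ≤ (A₀.card:ℝ) := by exact_mod_cast hc
            linarith
  obtain ⟨A, hAsub, hAcard, hAdiff⟩ := hAex
  refine ⟨A, hAsub, hAcard, ?_⟩
  intro k hk1 hkM1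
  have hkM : k < M := by omega
  set kf : Fin M := ⟨k, hkM⟩ with hkfdef
  have hgv : ∑ x ∈ Finset.range M, E k x = 0 := by
    simp only [hEdef]
    exact geom_vanish M k hk1 hkM
  have hS : ∑ x ∈ A₀, E k x = ∑ a, (Y M n (ω a) : ℂ) * z kf a := by
    rw [hrw kf, show ((kf : Fin M) : ℕ) = k from rfl, hgv, mul_zero, sub_zero]
  -- the decay radius
  set R : ℝ := (Bn:ℝ) * (n:ℝ) * (M:ℝ) ^ (-(β/2)) with hRdef
  have hR0 : (0:ℝ) ≤ R := by positivity
  have hjR : (1:ℝ) ≤ (j:ℝ) := by exact_mod_cast hj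
  have hMcast : (M:ℝ) = ((N:ℝ)) ^ (j:ℕ) := by rw [hMdef]; push_cast; ring
  have hncast : (n:ℝ) = ((t:ℝ)) ^ (j:ℕ) := by rw [hndef]; push_cast; ring
  have hcore : (M:ℝ) ^ ((1:ℝ) + β*(m:ℝ)) ≤ (n:ℝ) ^ (m:ℕ) := by
    calc (M:ℝ) ^ ((1:ℝ)+β*(m:ℝ)) = ((N:ℝ)^(j:ℕ)) ^ ((1:ℝ)+β*(m:ℝ)) := by rw [hMcast]
      _ = (N:ℝ) ^ ((j:ℝ) * ((1:ℝ)+β*(m:ℝ))) := by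
          rw [← Real.rpow_natCast (N:ℝ) j, ← Real.rpow_mul (by positivity)]
      _ ≤ (N:ℝ) ^ (α * ((j:ℝ) * (m:ℝ))) := by
          apply Real.rpow_le_rpow_of_exponent_le (le_of_lt hN1)
          have h1 : 1 + β * (m:ℝ) ≤ α * (m:ℝ) := by nlinarith
          nlinarith [hjR]
      _ = ((N:ℝ) ^ α) ^ ((j:ℝ) * (m:ℝ)) := by
          rw [← Real.rpow_mul (by positivity)]
      _ = (t:ℝ) ^ ((j:ℝ) * (m:ℝ)) := by rw [hNα]
      _ = (t:ℝ) ^ (((j*m : ℕ)):ℝ) := by push_cast; ring_nf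
      _ = (t:ℝ) ^ ((j*m : ℕ)) := Real.rpow_natCast _ _
      _ = ((t:ℝ)^(j:ℕ))^(m:ℕ) := by rw [pow_mul]
      _ = (n:ℝ)^(m:ℕ) := by rw [← hncast]
  have hRpow : R ^ (2*m) = (Bn:ℝ)^(2*m) * ((n:ℝ)^(m:ℕ) * (n:ℝ)^(m:ℕ) * (M:ℝ) ^ (-(β*(m:ℝ)))) := by
    rw [hRdef, mul_pow, mul_pow, ← Real.rpow_natCast ((M:ℝ) ^ (-(β/2))) (2*m),
      ← Real.rpow_mul (le_of_lt hMR0)]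
    rw [show (-(β/2)) * ((2*m : ℕ):ℝ) = -(β*(m:ℝ)) by push_cast; ring]
    rw [show 2*m = m + m from by ring, pow_add]
    ring
  have hkey : (Bn:ℝ) * (M:ℝ) * (n:ℝ)^(m:ℕ) ≤ R ^ (2*m) := by
    have hBnpow : (Bn:ℝ) ≤ (Bn:ℝ)^(2*m) := le_self_pow₀ (by linarith) h2m0
    have hstep : (M:ℝ) ≤ (n:ℝ)^(m:ℕ) * (M:ℝ)^(-(β*(m:ℝ))) := by
      have hMsplit : (M:ℝ) = (M:ℝ)^((1:ℝ)+β*(m:ℝ)) * (M:ℝ)^(-(β*(m:ℝ))) := by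
        rw [← Real.rpow_add hMR0, show (1:ℝ)+β*(m:ℝ) + -(β*(m:ℝ)) = 1 by ring, Real.rpow_one]
      calc (M:ℝ) = (M:ℝ)^((1:ℝ)+β*(m:ℝ)) * (M:ℝ)^(-(β*(m:ℝ))) := hMsplit
        _ ≤ (n:ℝ)^(m:ℕ) * (M:ℝ)^(-(β*(m:ℝ))) :=
            mul_le_mul_of_nonneg_right hcore (le_of_lt (Real.rpow_pos_of_pos hMR0 _))
    calc (Bn:ℝ) * (M:ℝ) * (n:ℝ)^(m:ℕ) = (Bn:ℝ) * ((M:ℝ) * (n:ℝ)^(m:ℕ)) := by ring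
      _ ≤ (Bn:ℝ)^(2*m) * ((M:ℝ) * (n:ℝ)^(m:ℕ)) := by
          exact mul_le_mul_of_nonneg_right hBnpow (by positivity)
      _ ≤ (Bn:ℝ)^(2*m) * ((n:ℝ)^(m:ℕ) * (n:ℝ)^(m:ℕ) * (M:ℝ)^(-(β*(m:ℝ)))) := by
          apply mul_le_mul_of_nonneg_left ?_ (by positivity)
          calc (M:ℝ) * (n:ℝ)^(m:ℕ)
              ≤ ((n:ℝ)^(m:ℕ) * (M:ℝ)^(-(β*(m:ℝ)))) * (n:ℝ)^(m:ℕ) :=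
                mul_le_mul_of_nonneg_right hstep (by positivity)
            _ = (n:ℝ)^(m:ℕ) * (n:ℝ)^(m:ℕ) * (M:ℝ)^(-(β*(m:ℝ))) := by ring
      _ = R ^ (2*m) := hRpow.symm
  have hXk : ‖∑ a, (Y M n (ω a):ℂ) * z kf a‖ ≤ R :=
    le_of_pow_le_pow_left₀ h2m0 hR0 (le_trans (hω kf) hkey)
  have hX0 : |(A₀.card:ℝ) - (n:ℝ)| ≤ R :=
    le_of_pow_le_pow_left₀ h2m0 hR0 (le_trans hcabs hkey)
  have htriangle : ‖∑ x ∈ A, E k x‖ ≤ R + R := by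
    calc ‖∑ x ∈ A, E k x‖
        = ‖((∑ x ∈ A, E k x) - (∑ x ∈ A₀, E k x)) + ∑ x ∈ A₀, E k x‖ := by
          rw [sub_add_cancel]
      _ ≤ ‖(∑ x ∈ A, E k x) - (∑ x ∈ A₀, E k x)‖
            + ‖∑ x ∈ A₀, E k x‖ := norm_add_le _ _
      _ ≤ R + R := by
          apply add_le_add (le_trans (hAdiff k) hX0)
          rw [hS]
          exact hXk
  have hFF : ‖finsetFourier M A k‖ = (M:ℝ)⁻¹ * ‖∑ x ∈ A, E k x‖ := by
    unfold finsetFourier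
    rw [norm_mul, norm_inv, Complex.norm_natCast]
    have hterm : ∀ x : ℕ, Complex.exp (-(2 * (Real.pi:ℂ) * Complex.I * (((k:ℕ):ℤ):ℂ) * (x:ℂ))
        / (M:ℂ)) = E k x := by
      intro x
      simp only [hEdef, Int.cast_natCast]
    rw [Finset.sum_congr rfl (fun x _ => hterm x)]
  rw [hFF]
  have hkdecay : (M:ℝ)^(-(β/2)) ≤ (k:ℝ)^(-β/2) := by
    rw [show -β/2 = -(β/2) by ring]
    rw [Real.rpow_neg (le_of_lt hMR0), Real.rpow_neg (by positivity)]
    apply inv_anti₀ (Real.rpow_pos_of_pos (by exact_mod_cast hk1) _)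
    apply Real.rpow_le_rpow (by positivity) (by exact_mod_cast hkM.le) (by linarith)
  have hnMdiv : (n:ℝ)/(M:ℝ) = ((t:ℝ)/(N:ℝ))^j := by
    rw [div_pow, ← hncast, ← hMcast]
  calc (M:ℝ)⁻¹ * ‖∑ x ∈ A, E k x‖ ≤ (M:ℝ)⁻¹ * (R + R) := by
        exact mul_le_mul_of_nonneg_left htriangle (by positivity)
    _ = (2*(Bn:ℝ)) * ((n:ℝ)/(M:ℝ)) * (M:ℝ)^(-(β/2)) := by
        rw [hRdef]; field_simp; ring
    _ = (2*(Bn:ℝ)) * ((t:ℝ)/(N:ℝ))^j * (M:ℝ)^(-(β/2)) := by rw [hnMdiv]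
    _ ≤ (2*(Bn:ℝ)) * ((t:ℝ)/(N:ℝ))^j * (k:ℝ)^(-β/2) := by
        apply mul_le_mul_of_nonneg_left hkdecay (by positivity)
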